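/- There exist g₁, g₂ ∈ (0,1/2) such that (1−4g₁g₂)² > E(2g₂√(1−4g₁²))² + E(2g₁√(1−4g₂²))², and there exist g₁, g₂ ∈ (0,1/2) such that (1−4g₁g₂)² < E(2g₂√(1−4g₁²))² + E(2g₁√(1−4g₂²))². (For non-generic GHZ-class states ψ(g₁,g₂,0,r) with r = 1, the source-entanglement monogamy relation E_s² ≥ E₁₂² + E₁₃² + E₂₃² is satisfied for some parameter values and violated for others.) -/

import Mathlib

/-- Binary Shannon entropy (base 2), with the convention `0 * log₂ 0 = 0`
(automatic since `Real.logb 2 0 = 0`). -/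
noncomputable def binEntropy (p : ℝ) : ℝ :=
  -p * Real.logb 2 p - (1 - p) * Real.logb 2 (1 - p)

/-- Entanglement-of-formation function of the concurrence `C`. -/
noncomputable def eof (C : ℝ) : ℝ :=
  binEntropy ((1 + Real.sqrt (1 - C ^ 2)) / 2)

lemma binEntropy_eq' (p : ℝ) :
    binEntropy p = (-(p * Real.log p) - ((1 - p) * Real.log (1 - p))) / Real.log 2 := by
  unfold binEntropy Real.logb; ring

lemma neg_xlogx_ge (x : ℝ) (hx : 0 ≤ x) : x * (1 - x) ≤ -(x * Real.log x) := by
  rcases eq_or_lt_of_le hx with h | h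
  · simp [← h]
  · nlinarith [Real.log_le_sub_one_of_pos h]

lemma neg_xlogx_le (x : ℝ) (hx : 0 ≤ x) : -(x * Real.log x) ≤ 1 - x := by
  rcases eq_or_lt_of_le hx with h | h
  · simp [← h]
  · have h2 : Real.log x⁻¹ ≤ x⁻¹ - 1 := Real.log_le_sub_one_of_pos (inv_pos.2 h)
    rw [Real.log_inv] at h2
    nlinarith [mul_le_mul_of_nonneg_left h2 hx, mul_inv_cancel₀ (ne_of_gt h)]

lemma neg_xlogx_le_sqrt (x : ℝ) (hx : 0 ≤ x) : -(x * Real.log x) ≤ 2 * Real.sqrt x := by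
  rcases eq_or_lt_of_le hx with h | h
  · simp [← h]
  · have hr : 0 < Real.sqrt x := Real.sqrt_pos.2 h
    have h2 : Real.log (Real.sqrt x)⁻¹ ≤ (Real.sqrt x)⁻¹ - 1 :=
      Real.log_le_sub_one_of_pos (inv_pos.2 hr)
    rw [Real.log_inv, Real.log_sqrt hx] at h2
    have h3 := mul_le_mul_of_nonneg_left h2 hx
    have h4 : x * (Real.sqrt x)⁻¹ = Real.sqrt x := by
      rw [← Real.sq_sqrt hx]; field_simp; rw [Real.sqrt_sq (Real.sqrt_nonneg x)]
    nlinarith [h3, h4, Real.sq_sqrt hx]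

lemma eof_ge (C : ℝ) (h0 : 0 ≤ C) (h1 : C ≤ 1) : C ^ 2 / (2 * Real.log 2) ≤ eof C := by
  have hC2 : 1 - C ^ 2 ≥ 0 := by nlinarith
  set s := Real.sqrt (1 - C ^ 2) with hsdef
  have hs0 : 0 ≤ s := Real.sqrt_nonneg _
  have hss : s ^ 2 = 1 - C ^ 2 := Real.sq_sqrt hC2
  have hs1 : s ≤ 1 := by nlinarith
  have hlog : 0 < Real.log 2 := Real.log_pos one_lt_two
  unfold eof
  rw [binEntropy_eq']
  set p := (1 + s) / 2 with hpdef
  have hp0 : 0 ≤ p := by rw [hpdef]; linarith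
  have hq0 : 0 ≤ 1 - p := by rw [hpdef]; linarith
  have h1' := neg_xlogx_ge p hp0
  have h2' := neg_xlogx_ge (1 - p) hq0
  rw [div_le_div_iff₀ (by positivity) hlog]
  have hpq : p * (1 - p) = C ^ 2 / 4 := by rw [hpdef]; nlinarith
  nlinarith [h1', h2', hpq, hlog]

lemma eof_nonneg (C : ℝ) (h0 : 0 ≤ C) (h1 : C ≤ 1) : 0 ≤ eof C := by
  have := eof_ge C h0 h1
  have hlog : 0 < Real.log 2 := Real.log_pos one_lt_two
  have : 0 ≤ C ^ 2 / (2 * Real.log 2) := by positivity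
  linarith [eof_ge C h0 h1]

lemma eof_le (C : ℝ) (h0 : 0 ≤ C) (h1 : C ≤ 1) :
    eof C ≤ (C ^ 2 / 2 + 2 * C) / Real.log 2 := by
  have hC2 : 1 - C ^ 2 ≥ 0 := by nlinarith
  set s := Real.sqrt (1 - C ^ 2) with hsdef
  have hs0 : 0 ≤ s := Real.sqrt_nonneg _
  have hss : s ^ 2 = 1 - C ^ 2 := Real.sq_sqrt hC2
  have hs1 : s ≤ 1 := by nlinarith
  have hslb : 1 - C ^ 2 ≤ s := by
    rw [hsdef]
    nlinarith [Real.sq_sqrt hC2, Real.sqrt_nonneg (1 - C ^ 2)]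
  have hlog : 0 < Real.log 2 := Real.log_pos one_lt_two
  unfold eof
  rw [binEntropy_eq']
  set p := (1 + s) / 2 with hpdef
  have hp0 : 0 ≤ p := by rw [hpdef]; linarith
  have hp1 : p ≤ 1 := by rw [hpdef]; linarith
  have hq0 : 0 ≤ 1 - p := by linarith
  have hq : 1 - p ≤ C ^ 2 / 2 := by rw [hpdef]; linarith
  have h1' := neg_xlogx_le p hp0
  have h2' := neg_xlogx_le_sqrt (1 - p) hq0
  have hsq : Real.sqrt (1 - p) ≤ C := by
    rw [show C = Real.sqrt (C ^ 2) by rw [Real.sqrt_sq h0]]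
    apply Real.sqrt_le_sqrt; linarith
  rw [div_le_div_iff₀ hlog hlog]
  nlinarith [h1', h2', hq, hsq, hlog]

/-- For non-generic GHZ-class states `ψ(g₁,g₂,0,1)`, the source-entanglement
monogamy relation is satisfied for some parameter values and violated for others. -/
theorem source_monogamy_sometimes_holds_sometimes_fails :
    (∃ g₁ ∈ Set.Ioo (0 : ℝ) (1 / 2), ∃ g₂ ∈ Set.Ioo (0 : ℝ) (1 / 2),
      (1 - 4 * g₁ * g₂) ^ 2 >
        (eof (2 * g₂ * Real.sqrt (1 - 4 * g₁ ^ 2))) ^ 2 +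
        (eof (2 * g₁ * Real.sqrt (1 - 4 * g₂ ^ 2))) ^ 2) ∧
    (∃ g₁ ∈ Set.Ioo (0 : ℝ) (1 / 2), ∃ g₂ ∈ Set.Ioo (0 : ℝ) (1 / 2),
      (1 - 4 * g₁ * g₂) ^ 2 <
        (eof (2 * g₂ * Real.sqrt (1 - 4 * g₁ ^ 2))) ^ 2 +
        (eof (2 * g₁ * Real.sqrt (1 - 4 * g₂ ^ 2))) ^ 2) := by
  have hlogpos : 0 < Real.log 2 := Real.log_pos one_lt_two
  have hloglb : (0.6931471803 : ℝ) < Real.log 2 := Real.log_two_gt_d9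
  have hlogub : Real.log 2 < 0.6931471808 := Real.log_two_lt_d9
  constructor
  · -- g₁ = g₂ = 1/20
    refine ⟨1/20, ⟨by norm_num, by norm_num⟩, 1/20, ⟨by norm_num, by norm_num⟩, ?_⟩
    set C := 2 * (1/20 : ℝ) * Real.sqrt (1 - 4 * (1/20 : ℝ) ^ 2) with hC
    have hr : (0 : ℝ) ≤ 1 - 4 * (1/20 : ℝ) ^ 2 := by norm_num
    have hrs : (Real.sqrt (1 - 4 * (1/20 : ℝ) ^ 2)) ^ 2 = 1 - 4 * (1/20 : ℝ) ^ 2 :=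
      Real.sq_sqrt hr
    have hC0 : 0 ≤ C := by
      rw [hC]; positivity
    have hC2 : C ^ 2 = 99 / 10000 := by rw [hC]; nlinarith [hrs]
    have hC1 : C ≤ 1/10 := by nlinarith
    have hub := eof_le C hC0 (by linarith)
    have hnn := eof_nonneg C hC0 (by linarith)
    have hub2 : eof C ≤ (41/200) / Real.log 2 := by
      apply hub.trans
      gcongr
      nlinarith
    have hmul : eof C * Real.log 2 ≤ 41/200 := by
      rwa [le_div_iff₀ hlogpos] at hub2
    have hub3 : eof C ≤ 3/10 := by
      nlinarith [mul_le_mul_of_nonneg_left hloglb.le hnn]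
    nlinarith [hub3, hnn]
  · -- g₁ = g₂ = 499/1000
    refine ⟨499/1000, ⟨by norm_num, by norm_num⟩, 499/1000, ⟨by norm_num, by norm_num⟩, ?_⟩
    set C := 2 * (499/1000 : ℝ) * Real.sqrt (1 - 4 * (499/1000 : ℝ) ^ 2) with hC
    have hr : (0 : ℝ) ≤ 1 - 4 * (499/1000 : ℝ) ^ 2 := by norm_num
    have hrs : (Real.sqrt (1 - 4 * (499/1000 : ℝ) ^ 2)) ^ 2 = 1 - 4 * (499/1000 : ℝ) ^ 2 :=
      Real.sq_sqrt hr
    have hC0 : 0 ≤ C := by rw [hC]; positivity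
    have hC2 : C ^ 2 = (996004/1000000 : ℝ) * (999/250000) := by rw [hC]; nlinarith [hrs]
    have hC1 : C ≤ 1 := by nlinarith
    have hlb := eof_ge C hC0 hC1
    have hnn := eof_nonneg C hC0 hC1
    have hmul : C ^ 2 ≤ eof C * (2 * Real.log 2) := by
      rwa [div_le_iff₀ (by positivity)] at hlb
    have hlb2 : (996004/1000000 : ℝ) * (999/250000) / (2 * 0.6931471808) ≤ eof C := by
      rw [div_le_iff₀ (by norm_num)]
      nlinarith [mul_le_mul_of_nonneg_left hlogub.le hnn]
    nlinarith [hlb2, hnn]
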